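/- Let D be a 1-Poincaré distribution on ℝ, let μ ∈ ℝ, and let P_t be the D-adjusted polynomials (P_0 = 1, P_t(x) = x^t − ∑_{s=1}^{t} C(t,s)·E_{z∼D}[z^s]·P_{t−s}(x)). Assume P_t′ = t·P_{t−1} and E_{z∼D(μ)}[P_t(z)] = μ^t for all t. Then for every t ≥ 1, E_{z∼D(μ)}[P_t(z)²] ≤ (μ² + t²)^t. -/

import Mathlib

open MeasureTheory ProbabilityTheory

/-- The adjusted polynomials of a sequence of moments `m`:
`P_0(x) = 1` and `P_t(x) = x^t - ∑_{s=1}^t C(t,s) m_s P_{t-s}(x)`. -/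
noncomputable def adjP (m : ℕ → ℝ) : ℕ → ℝ → ℝ
  | 0 => fun _ => 1
  | t + 1 => fun x =>
      x ^ (t + 1) -
        ∑ s ∈ Finset.range (t + 1),
          ((t + 1).choose (s + 1) : ℝ) * m (s + 1) * adjP m (t - s) x
  decreasing_by exact Nat.lt_succ_of_le (Nat.sub_le t s)

lemma adjP_diff (m : ℕ → ℝ) : ∀ t, Differentiable ℝ (adjP m t) := by
  intro t
  induction t using Nat.strong_induction_on with
  | _ t ih =>
    match t with
    | 0 => simpa [adjP] using differentiable_const (1 : ℝ)
    | t + 1 =>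
      rw [adjP]
      exact (differentiable_id.pow _).sub (Differentiable.fun_sum fun s hs =>
        Differentiable.const_mul (ih (t - s) (Nat.lt_succ_of_le (Nat.sub_le t s))) _)

/-- Let `D` be a mean-zero `1`-Poincaré distribution on `ℝ`, `μ ∈ ℝ`, and let `P_t` be the
`D`-adjusted polynomials. Assuming the derivative recurrence `P_t' = t P_{t-1}` and the
unbiasedness identity `E_{z ∼ D(μ)}[P_t(z)] = μ^t`, one has
`E_{z ∼ D(μ)}[P_t(z)²] ≤ (μ² + t²)^t` for every `t ≥ 1`. -/
theorem stmt13 (D : Measure ℝ) [IsProbabilityMeasure D]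
    (hP : ∀ f : ℝ → ℝ, Differentiable ℝ f →
      variance f D ≤ ∫ z, (deriv f z) ^ 2 ∂D)
    (hmean : ∫ z, z ∂D = 0)
    (μ : ℝ) (m : ℕ → ℝ) (hm : ∀ s, m s = ∫ z, z ^ s ∂D)
    (hderiv : ∀ t : ℕ, 1 ≤ t → ∀ x, deriv (adjP m t) x = t * adjP m (t - 1) x)
    (hunbiased : ∀ t : ℕ, ∫ z, adjP m t (μ + z) ∂D = μ ^ t)
    (t : ℕ) (ht : 1 ≤ t) :
    ∫ z, (adjP m t (μ + z)) ^ 2 ∂D ≤ (μ ^ 2 + (t : ℝ) ^ 2) ^ t := by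
  clear ht
  induction t with
  | zero => simp [adjP]
  | succ t iht =>
    set f : ℝ → ℝ := fun z => adjP m (t + 1) (μ + z) with hf
    have hfd : Differentiable ℝ f := by
      intro z
      exact ((adjP_diff m (t + 1) (μ + z)).hasDerivAt.comp z
        ((hasDerivAt_id z).const_add μ)).differentiableAt
    have hderivf : ∀ z, deriv f z = (t + 1 : ℝ) * adjP m t (μ + z) := by
      intro z
      have h1 : HasDerivAt f (deriv (adjP m (t + 1)) (μ + z) * 1) z :=
        (adjP_diff m (t + 1) (μ + z)).hasDerivAt.comp z ((hasDerivAt_id z).const_add μ)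
      rw [h1.deriv, hderiv (t + 1) (Nat.le_add_left 1 t) (μ + z)]
      push_cast
      ring
    -- base positivity facts
    have hbase : (0 : ℝ) ≤ μ ^ 2 + ((t : ℝ) + 1) ^ 2 := by positivity
    have hRHSpos : (0 : ℝ) < (μ ^ 2 + ((t + 1 : ℕ) : ℝ) ^ 2) ^ (t + 1) := by
      push_cast; positivity
    by_cases hint : Integrable (fun z => f z ^ 2) D
    · have hmem : MemLp f 2 D :=
        (memLp_two_iff_integrable_sq (hfd.continuous.aestronglyMeasurable)).2 hint
      have hvar : variance f D = (∫ z, f z ^ 2 ∂D) - (μ ^ (t + 1)) ^ 2 := by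
        rw [variance_eq_sub hmem]
        have : ∫ z, f z ∂D = μ ^ (t + 1) := hunbiased (t + 1)
        rw [← this]
        rfl
      have hpoin := hP f hfd
      have hderint : ∫ z, (deriv f z) ^ 2 ∂D
          = ((t : ℝ) + 1) ^ 2 * ∫ z, (adjP m t (μ + z)) ^ 2 ∂D := by
        rw [← integral_const_mul]
        congr 1
        funext z
        rw [hderivf z, mul_pow]
      have hIH : ∫ z, (adjP m t (μ + z)) ^ 2 ∂D ≤ (μ ^ 2 + (t : ℝ) ^ 2) ^ t := iht
      have hIH2 : ∫ z, (adjP m t (μ + z)) ^ 2 ∂D ≤ (μ ^ 2 + ((t : ℝ) + 1) ^ 2) ^ t := by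
        refine hIH.trans (pow_le_pow_left₀ (by positivity) ?_ t)
        have : (t : ℝ) ^ 2 ≤ ((t : ℝ) + 1) ^ 2 := by nlinarith [Nat.cast_nonneg (α := ℝ) t]
        linarith
      have key : (∫ z, f z ^ 2 ∂D)
          ≤ (μ ^ (t + 1)) ^ 2 + ((t : ℝ) + 1) ^ 2 * (μ ^ 2 + ((t : ℝ) + 1) ^ 2) ^ t := by
        have := hpoin
        rw [hvar, hderint] at this
        nlinarith [sq_nonneg ((t : ℝ) + 1)]
      refine key.trans ?_
      push_cast
      have hexp : (μ ^ 2 + ((t : ℝ) + 1) ^ 2) ^ (t + 1)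
          = μ ^ 2 * (μ ^ 2 + ((t : ℝ) + 1) ^ 2) ^ t
            + ((t : ℝ) + 1) ^ 2 * (μ ^ 2 + ((t : ℝ) + 1) ^ 2) ^ t := by ring
      rw [hexp]
      have h1 : (μ ^ (t + 1)) ^ 2 ≤ μ ^ 2 * (μ ^ 2 + ((t : ℝ) + 1) ^ 2) ^ t := by
        have : (μ ^ (t + 1)) ^ 2 = μ ^ 2 * (μ ^ 2) ^ t := by ring
        rw [this]
        have := pow_le_pow_left₀ (sq_nonneg μ) (by nlinarith [Nat.cast_nonneg (α := ℝ) t] : μ ^ 2 ≤ μ ^ 2 + ((t : ℝ) + 1) ^ 2) t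
        nlinarith [sq_nonneg μ]
      linarith
    · show ∫ z, f z ^ 2 ∂D ≤ _
      rw [integral_undef hint]
      exact hRHSpos.le
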